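/- The radius 1 − √(2/3) is best possible in the Bohr inequality for derivatives: for every r with 1 − √(2/3) < r < 1 there exists an analytic function w on the open unit disk D with w(D) ⊆ D and w(0) = 0 such that M_{w'}(r) > 1. (Such examples are given by w(z) = ξ_a(z) := z(z−a)/(1−az) with a ∈ [0,1) close to 1.) -/

import Mathlib

open Metric

/-- The majorant series `M_F(r) = ∑ |A_n| r^n` of an analytic function
`F(z) = ∑ A_n z^n` on the unit disk, where `A_n = F⁽ⁿ⁾(0)/n!`. -/
noncomputable def majorant (F : ℂ → ℂ) (r : ℝ) : ℝ :=
  ∑' n : ℕ, ‖iteratedDeriv n F 0 / n.factorial‖ * r ^ n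

/-- `g` is subordinate to `f` on the unit disk: `g = f ∘ φ` for some analytic
self-map `φ` of the unit disk with `φ 0 = 0`. -/
def Subordinate (g f : ℂ → ℂ) : Prop :=
  ∃ φ : ℂ → ℂ, AnalyticOnNhd ℂ φ (ball 0 1) ∧ φ 0 = 0 ∧
    Set.MapsTo φ (ball 0 1) (ball 0 1) ∧ Set.EqOn g (f ∘ φ) (ball 0 1)

/-- Auxiliary summation lemma. -/
lemma aux_hasSum {𝕜 : Type*} [RCLike 𝕜] {t y u v : 𝕜} (h : ‖t * y‖ < 1)
    (c : ℕ → 𝕜) (hc0 : c 0 = u) (hcs : ∀ m : ℕ, c (m + 1) = v * (m + 2) * t ^ m) :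
    HasSum (fun n => c n * y ^ n) (u + v * y * (2 - t * y) / (1 - t * y) ^ 2) := by
  set x := t * y with hxdef
  have hx1 : (1 : 𝕜) - x ≠ 0 := by
    intro hzero
    have : x = 1 := by linear_combination -hzero
    rw [this] at h; simp at h
  have h1 : HasSum (fun n : ℕ => (n : 𝕜) * x ^ n) (x / (1 - x) ^ 2) :=
    hasSum_coe_mul_geometric_of_norm_lt_one h
  have h2 : HasSum (fun n : ℕ => x ^ n) ((1 - x)⁻¹) :=
    hasSum_geometric_of_norm_lt_one h
  have h3 : HasSum (fun m : ℕ => ((m : 𝕜) + 2) * x ^ m)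
      (x / (1 - x) ^ 2 + 2 * (1 - x)⁻¹) := by
    have := h1.add (h2.mul_left 2)
    convert this using 2 with m
    ring
  have h4 : HasSum (fun m : ℕ => c (m + 1) * y ^ (m + 1))
      ((v * y) * (x / (1 - x) ^ 2 + 2 * (1 - x)⁻¹)) := by
    have := h3.mul_left (v * y)
    convert this using 1
    · rfl
    funext m
    rw [hcs m, hxdef, mul_pow]
    ring
  have h5 := (hasSum_nat_add_iff (f := fun n => c n * y ^ n) 1).mp h4
  have : (v * y) * (x / (1 - x) ^ 2 + 2 * (1 - x)⁻¹)
      + ∑ i ∈ Finset.range 1, c i * y ^ i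
      = u + v * y * (2 - x) / (1 - x) ^ 2 := by
    rw [Finset.sum_range_one, hc0]
    field_simp
    ring
  rwa [this] at h5


set_option maxHeartbeats 1600000 in
/-- The radius `1 - √(2/3)` in the Bohr inequality for derivatives is best
possible. -/
theorem bohr_deriv_radius_sharp :
    ∀ r : ℝ, 1 - Real.sqrt (2 / 3) < r → r < 1 →
      ∃ w : ℂ → ℂ, AnalyticOnNhd ℂ w (ball 0 1) ∧
        Set.MapsTo w (ball 0 1) (ball 0 1) ∧ w 0 = 0 ∧
        1 < majorant (deriv w) r := by
  intro r hr1 hr2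
  -- r is positive
  have hs : Real.sqrt (2 / 3) ≤ 1 := by
    rw [show (1:ℝ) = Real.sqrt 1 by simp]
    exact Real.sqrt_le_sqrt (by norm_num)
  have hr0 : 0 < r := by linarith
  -- the key inequality at a = 1
  have hF1 : 0 < 2 * r * (2 - r) - (1 - r) ^ 2 := by
    have h1 : (1 - r) < Real.sqrt (2 / 3) := by linarith
    have h2 : (1 - r) ^ 2 < 2 / 3 := by
      have := Real.sq_sqrt (show (0:ℝ) ≤ 2/3 by norm_num)
      nlinarith [Real.sqrt_nonneg (2/3:ℝ)]
    nlinarith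
  -- choose a < 1 with F a > 0
  set F : ℝ → ℝ := fun a => (1 + a) * r * (2 - a * r) - (1 - a * r) ^ 2 with hFdef
  have hFcont : Continuous F := by continuity
  have hev : ∀ᶠ a in nhdsWithin (1:ℝ) (Set.Iio 1), 0 < F a ∧ 0 < a ∧ a < 1 := by
    have e1 : ∀ᶠ a in nhds (1:ℝ), 0 < F a := by
      have hF1' : 0 < F 1 := by rw [hFdef]; dsimp only; nlinarith
      exact (hFcont.continuousAt).eventually (eventually_gt_nhds hF1')
    have e2 : ∀ᶠ a in nhds (1:ℝ), 0 < a := eventually_gt_nhds (by norm_num)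
    have e3 : ∀ᶠ a in nhdsWithin (1:ℝ) (Set.Iio 1), a < 1 :=
      eventually_mem_nhdsWithin.mono fun a ha => ha
    filter_upwards [(e1.and e2).filter_mono nhdsWithin_le_nhds, e3] with a h1 h2
    exact ⟨h1.1, h1.2, h2⟩
  obtain ⟨a, hFa, ha0, ha1⟩ := hev.exists
  -- the function and its derivative
  set A : ℂ := (a : ℂ) with hAdef
  set w : ℂ → ℂ := fun z => z * (z - A) / (1 - A * z) with hwdef
  set g : ℂ → ℂ := fun z => (-A + 2 * z - A * z ^ 2) / (1 - A * z) ^ 2 with hgdef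
  have hnormA : ‖A‖ = a := by simp [hAdef, abs_of_pos ha0]
  have hden : ∀ z : ℂ, z ∈ ball (0:ℂ) 1 → (1 : ℂ) - A * z ≠ 0 := by
    intro z hz hzero
    have hz1 : ‖z‖ < 1 := by simpa using hz
    have hlt : ‖A * z‖ < 1 := by
      rw [norm_mul, hnormA]
      nlinarith [norm_nonneg z]
    have heq : A * z = 1 := by linear_combination -hzero
    rw [heq] at hlt; norm_num at hlt
  -- analyticity
  have hw_an : AnalyticOnNhd ℂ w (ball 0 1) := by
    intro z hz
    exact ((analyticAt_id.mul (analyticAt_id.sub analyticAt_const)).div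
      (analyticAt_const.sub (analyticAt_const.mul analyticAt_id)) (hden z hz))
  -- maps to ball
  have hw_maps : Set.MapsTo w (ball 0 1) (ball 0 1) := by
    intro z hz
    have hz1 : ‖z‖ < 1 := by simpa using hz
    have hnum : ‖z - A‖ ≤ ‖1 - A * z‖ := by
      have h1 : Complex.normSq (z - A) ≤ Complex.normSq (1 - A * z) := by
        simp only [Complex.normSq_apply, Complex.sub_re, Complex.sub_im, Complex.mul_re,
          Complex.mul_im, Complex.one_re, Complex.one_im, hAdef, Complex.ofReal_re,
          Complex.ofReal_im]
        have hz2 : z.re ^ 2 + z.im ^ 2 < 1 := by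
          have h2 : ‖z‖ ^ 2 = z.re ^ 2 + z.im ^ 2 := by
            rw [Complex.sq_norm, Complex.normSq_apply]; ring
          nlinarith [norm_nonneg z]
        nlinarith [mul_nonneg (by nlinarith : (0:ℝ) ≤ 1 - a ^ 2)
          (by nlinarith : (0:ℝ) ≤ 1 - (z.re ^ 2 + z.im ^ 2))]
      calc ‖z - A‖ = Real.sqrt (Complex.normSq (z - A)) := by
              rw [Complex.norm_def]
        _ ≤ Real.sqrt (Complex.normSq (1 - A * z)) := Real.sqrt_le_sqrt h1
        _ = ‖1 - A * z‖ := by rw [Complex.norm_def]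
    have hdenpos : 0 < ‖(1:ℂ) - A * z‖ := norm_pos_iff.mpr (hden z hz)
    have : ‖w z‖ ≤ ‖z‖ := by
      rw [hwdef]
      simp only [norm_div, norm_mul]
      rw [div_le_iff₀ hdenpos]
      calc ‖z‖ * ‖z - A‖ ≤ ‖z‖ * ‖1 - A * z‖ :=
            mul_le_mul_of_nonneg_left hnum (norm_nonneg z)
        _ = ‖z‖ * ‖1 - A * z‖ := rfl
    simp only [mem_ball, dist_zero_right]
    exact lt_of_le_of_lt this hz1
  -- w 0 = 0
  have hw0 : w 0 = 0 := by simp [hwdef]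
  -- deriv w = g on the ball
  have hderiv : ∀ z ∈ ball (0:ℂ) 1, deriv w z = g z := by
    intro z hz
    have hd := hden z hz
    have hu : HasDerivAt (fun z : ℂ => z * (z - A)) (1 * (z - A) + z * 1) z :=
      (hasDerivAt_id z).mul ((hasDerivAt_id z).sub_const A)
    have hv : HasDerivAt (fun z : ℂ => 1 - A * z) (0 - A * 1) z :=
      (hasDerivAt_const z (1:ℂ)).sub ((hasDerivAt_id z).const_mul A)
    have hq := hu.div hv hd
    have : deriv w z = ((1 * (z - A) + z * 1) * (1 - A * z) - z * (z - A) * (0 - A * 1)) / (1 - A * z) ^ 2 :=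
      hq.deriv
    rw [this, hgdef]
    field_simp
    ring
  -- the coefficients of g
  set e : ℕ → ℝ := fun n => Nat.casesOn n (-a) (fun m => (1 - a^2) * (m + 2) * a ^ m) with hedef
  set d : ℕ → ℂ := fun n => ((e n : ℝ) : ℂ) with hddef
  set q : FormalMultilinearSeries ℂ ℂ ℂ := FormalMultilinearSeries.ofScalars ℂ d with hqdef
  have hecoef : ∀ m : ℕ, 0 ≤ (1 - a ^ 2) * ((m : ℝ) + 2) * a ^ m := fun m =>
    mul_nonneg (mul_nonneg (by nlinarith) (by positivity)) (pow_nonneg ha0.le m)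
  have he0 : e 0 = -a := rfl
  have hes : ∀ m : ℕ, e (m + 1) = (1 - a ^ 2) * ((m : ℝ) + 2) * a ^ m := fun m => rfl
  have habs0 : |e 0| = a := by rw [he0, abs_neg, abs_of_pos ha0]
  have habss : ∀ m : ℕ, |e (m + 1)| = (1 - a ^ 2) * ((m : ℝ) + 2) * a ^ m := fun m => by
    rw [hes m]; exact abs_of_nonneg (hecoef m)
  have hd0 : d 0 = -A := by rw [hddef]; dsimp only; rw [he0, hAdef]; push_cast; ring
  have hds : ∀ m : ℕ, d (m + 1) = (1 - A^2) * ((m : ℂ) + 2) * A ^ m := by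
    intro m; rw [hddef]; dsimp only; rw [hes m, hAdef]; push_cast; ring
  -- HasSum for g
  have hsum_g : ∀ y : ℂ, ‖y‖ < 1 → HasSum (fun n => d n * y ^ n) (g y) := by
    intro y hy
    have hAy : ‖A * y‖ < 1 := by
      rw [norm_mul, hnormA]; nlinarith [norm_nonneg y]
    have := aux_hasSum (t := A) (y := y) (u := -A) (v := 1 - A^2) hAy d hd0 hds
    convert this using 1
    · rfl
    have hne : (1:ℂ) - A * y ≠ 0 := by
      intro hzero
      have : A * y = 1 := by linear_combination -hzero
      rw [this] at hAy; simp at hAy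
    rw [hgdef]
    field_simp
    ring
  -- g has the power series q on ball 0 1
  have hq_norm : ∀ n, ‖q n‖ = |e n| := by
    intro n
    rw [hqdef, FormalMultilinearSeries.ofScalars_norm, hddef]
    dsimp only
    rw [Complex.norm_real, Real.norm_eq_abs]
  have h_radius : (1 : ENNReal) ≤ q.radius := by
    refine ENNReal.le_of_forall_nnreal_lt (fun ρ hρ => ?_)
    apply q.le_radius_of_summable
    have hρ1 : (ρ : ℝ) < 1 := by exact_mod_cast hρ
    have hρ0 : (0:ℝ) ≤ ρ := ρ.2
    have haρ : ‖a * (ρ:ℝ)‖ < 1 := by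
      rw [Real.norm_eq_abs, abs_of_nonneg (by positivity)]
      nlinarith
    have hsm := (aux_hasSum (𝕜 := ℝ) (t := a) (y := (ρ:ℝ)) (u := a) (v := 1 - a^2) haρ
      (fun n => |e n|) habs0 habss).summable
    have hfe : (fun n => ‖q n‖ * (ρ:ℝ) ^ n) = fun n => |e n| * (ρ:ℝ) ^ n :=
      funext fun n => by rw [hq_norm n]
    rw [hfe]
    exact hsm
  have hg_ps : HasFPowerSeriesOnBall g q 0 1 := by
    refine ⟨h_radius, by norm_num, fun {y} hy => ?_⟩
    have hy1 : ‖y‖ < 1 := by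
      rw [mem_emetric_ball_zero_iff] at hy
      rw [← ofReal_norm, ENNReal.ofReal_lt_one] at hy
      exact hy
    rw [zero_add]
    convert hsum_g y hy1 using 1
    · rfl
    funext n
    rw [hqdef, FormalMultilinearSeries.ofScalars_apply_eq, smul_eq_mul]
  -- iterated derivatives of deriv w at 0
  have h_iter : ∀ n : ℕ, iteratedDeriv n (deriv w) 0 = (n.factorial : ℂ) * d n := by
    intro n
    have heq : deriv w =ᶠ[nhds (0:ℂ)] g := by
      filter_upwards [isOpen_ball.mem_nhds (by simp : (0:ℂ) ∈ ball (0:ℂ) 1)] with z hz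
      exact hderiv z hz
    rw [heq.iteratedDeriv_eq n]
    have := hg_ps.factorial_smul (1 : ℂ) n
    rw [iteratedDeriv_eq_iteratedFDeriv, ← this, hqdef,
      FormalMultilinearSeries.ofScalars_apply_eq]
    simp [mul_comm]
  -- compute the majorant
  have h_term : ∀ n : ℕ, ‖iteratedDeriv n (deriv w) 0 / (n.factorial : ℂ)‖ * r ^ n
      = |e n| * r ^ n := by
    intro n
    have hfac : ((n.factorial : ℂ)) ≠ 0 := Nat.cast_ne_zero.mpr n.factorial_ne_zero
    rw [h_iter n, mul_comm ((n.factorial : ℂ)) (d n), mul_div_assoc, div_self hfac, mul_one,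
      hddef]
    dsimp only
    rw [Complex.norm_real, Real.norm_eq_abs]
  have har : ‖a * r‖ < 1 := by
    rw [Real.norm_eq_abs, abs_of_nonneg (by positivity)]
    nlinarith
  have hsum_maj : HasSum (fun n => |e n| * r ^ n)
      (a + (1 - a^2) * r * (2 - a * r) / (1 - a * r) ^ 2) :=
    aux_hasSum (𝕜 := ℝ) (t := a) (y := r) (u := a) (v := 1 - a^2) har
      (fun n => |e n|) habs0 habss
  have hmaj : majorant (deriv w) r = a + (1 - a^2) * r * (2 - a * r) / (1 - a * r) ^ 2 := by
    rw [majorant]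
    rw [tsum_congr h_term]
    exact hsum_maj.tsum_eq
  refine ⟨w, hw_an, hw_maps, hw0, ?_⟩
  rw [hmaj]
  have hFa' : 0 < (1 + a) * r * (2 - a * r) - (1 - a * r) ^ 2 := hFa
  have hdenpos : (0:ℝ) < (1 - a * r) ^ 2 := by
    have : a * r < 1 := by nlinarith
    nlinarith
  rw [← sub_pos]
  have key : a + (1 - a^2) * r * (2 - a * r) / (1 - a * r) ^ 2 - 1
      = (1 - a) * ((1 + a) * r * (2 - a * r) - (1 - a * r) ^ 2) / (1 - a * r) ^ 2 := by
    have : 1 - a * r ≠ 0 := fun h => by simp [h] at hdenpos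
    field_simp
    ring
  rw [key]
  exact div_pos (mul_pos (by linarith) hFa') hdenpos
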